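/- Let (Ω, μ) be a measure space, p₁,…,pₙ ∈ (1,∞) with Σ 1/pᵢ = 1, and fᵢ ∈ L^{pᵢ} nonnegative with ‖fᵢ‖_{pᵢ} > 0. Then ‖Π fᵢ‖₁ ≤ (Π ‖fᵢ‖_{pᵢ}) · (1 − (p_max/(p_max−1)) · Σᵢ (1/pᵢ) ‖ fᵢ^{pᵢ/2}/‖fᵢ‖_{pᵢ}^{pᵢ/2} − Σ_k (1/p_k) f_k^{p_k/2}/‖f_k‖_{p_k}^{p_k/2} ‖₂²). -/

import Mathlib

open Finset

lemma key_ineq {n : ℕ} (α y : Fin n → ℝ) (β : ℝ) (hβ0 : 0 ≤ β) (hβ1 : β < 1)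
    (hα : ∀ i, 0 ≤ α i) (hαβ : ∀ i, β ≤ α i) (hs : ∑ i, α i = 1)
    (hy : ∀ i, 0 ≤ y i) :
    β * ∑ i, α i * y i ^ 2 + (1 - β) * ∏ i, y i ^ (2 * α i) ≤ (∑ i, α i * y i) ^ 2 := by
  set W : ℝ := 1 - β with hW
  have hWpos : 0 < W := by simp [hW]; linarith
  set w : Fin n × Fin n → ℝ := fun ij => (α ij.1 * α ij.2 - if ij.1 = ij.2 then α ij.1 * β else 0) / W with hwdef
  have hwnn : ∀ ij : Fin n × Fin n, 0 ≤ w ij := by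
    rintro ⟨i, j⟩
    apply div_nonneg _ hWpos.le
    by_cases h : i = j
    · subst h
      rw [if_pos rfl]
      nlinarith [hα i, hαβ i]
    · simp only [if_neg h, sub_zero]
      exact mul_nonneg (hα i) (hα j)
  have hrow : ∀ i, ∑ j, w (i, j) = α i := by
    intro i
    have e : ∑ j, w (i, j) = ((∑ j, α i * α j) - α i * β) / W := by
      rw [← Finset.sum_div, Finset.sum_sub_distrib]
      congr 1
      simp
    rw [e, ← Finset.mul_sum, hs, mul_one, hW]
    have hW1 : (1:ℝ) - β ≠ 0 := by linarith
    field_simp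
  have hcol : ∀ j, ∑ i, w (i, j) = α j := by
    intro j
    have e : ∑ i, w (i, j) = ((∑ i, α i * α j) - α j * β) / W := by
      rw [← Finset.sum_div, Finset.sum_sub_distrib]
      congr 1
      simp
    rw [e, ← Finset.sum_mul, hs, one_mul, hW]
    have hW1 : (1:ℝ) - β ≠ 0 := by linarith
    field_simp
  have hwsum : ∑ ij : Fin n × Fin n, w ij = 1 := by
    rw [Fintype.sum_prod_type]
    simp_rw [hrow]
    rw [hs]
  have hz : ∀ ij : Fin n × Fin n, 0 ≤ y ij.1 * y ij.2 :=
    fun ij => mul_nonneg (hy _) (hy _)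
  have amgm := Real.geom_mean_le_arith_mean_weighted univ w (fun ij => y ij.1 * y ij.2)
    (fun ij _ => hwnn ij) hwsum (fun ij _ => hz ij)
  -- product equality
  have hprod : ∏ ij : Fin n × Fin n, (y ij.1 * y ij.2) ^ w ij = ∏ i, y i ^ (2 * α i) := by
    have step1 : ∀ ij : Fin n × Fin n, (y ij.1 * y ij.2) ^ w ij
        = y ij.1 ^ w ij * y ij.2 ^ w ij :=
      fun ij => Real.mul_rpow (hy _) (hy _)
    rw [Finset.prod_congr rfl (fun ij _ => step1 ij), Finset.prod_mul_distrib]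
    have p1 : ∏ ij : Fin n × Fin n, y ij.1 ^ w ij = ∏ i, y i ^ α i := by
      rw [Fintype.prod_prod_type]
      refine Finset.prod_congr rfl (fun i _ => ?_)
      rw [← Real.rpow_sum_of_nonneg (hy i) (fun j _ => hwnn (i, j)), hrow]
    have p2 : ∏ ij : Fin n × Fin n, y ij.2 ^ w ij = ∏ i, y i ^ α i := by
      rw [Fintype.prod_prod_type_right]
      refine Finset.prod_congr rfl (fun j _ => ?_)
      rw [← Real.rpow_sum_of_nonneg (hy j) (fun i _ => hwnn (i, j)), hcol]
    rw [p1, p2, ← Finset.prod_mul_distrib]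
    refine Finset.prod_congr rfl (fun i _ => ?_)
    rw [← Real.rpow_add_of_nonneg (hy i) (hα i) (hα i), two_mul]
  -- sum equality
  have hsum : (∑ ij : Fin n × Fin n, w ij * (y ij.1 * y ij.2)) * W
      = (∑ i, α i * y i) ^ 2 - β * ∑ i, α i * y i ^ 2 := by
    rw [Finset.sum_mul]
    have : ∀ ij : Fin n × Fin n, w ij * (y ij.1 * y ij.2) * W
        = α ij.1 * α ij.2 * (y ij.1 * y ij.2)
          - (if ij.1 = ij.2 then α ij.1 * β else 0) * (y ij.1 * y ij.2) := by
      rintro ⟨i, j⟩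
      simp only [hwdef]
      rw [div_mul_eq_mul_div, div_mul_cancel₀ _ hWpos.ne', sub_mul]
    rw [Finset.sum_congr rfl (fun ij _ => this ij), Finset.sum_sub_distrib]
    have e1 : ∑ ij : Fin n × Fin n, α ij.1 * α ij.2 * (y ij.1 * y ij.2)
        = (∑ i, α i * y i) ^ 2 := by
      rw [sq, Finset.sum_mul_sum, Fintype.sum_prod_type]
      refine Finset.sum_congr rfl fun i _ => Finset.sum_congr rfl fun j _ => by ring
    have e2 : ∑ ij : Fin n × Fin n, (if ij.1 = ij.2 then α ij.1 * β else 0) * (y ij.1 * y ij.2)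
        = β * ∑ i, α i * y i ^ 2 := by
      rw [Fintype.sum_prod_type]
      have : ∀ i : Fin n, ∑ j, (if i = j then α i * β else 0) * (y i * y j)
          = β * (α i * y i ^ 2) := by
        intro i
        simp_rw [ite_mul, zero_mul]
        rw [Finset.sum_ite_eq univ i (fun j => α i * β * (y i * y j))]
        simp only [Finset.mem_univ, if_true]
        ring
      rw [Finset.sum_congr rfl (fun i _ => this i), ← Finset.mul_sum]
    rw [e1, e2]
  nlinarith [mul_le_mul_of_nonneg_right amgm hWpos.le,
    Finset.prod_nonneg (fun i (_ : i ∈ univ) => Real.rpow_nonneg (hy i) (2 * α i))]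

lemma pointwise_refined {n : ℕ} (α : Fin n → ℝ) (β c : ℝ) (hβ0 : 0 ≤ β) (hβ1 : β < 1)
    (hα : ∀ i, 0 ≤ α i) (hαβ : ∀ i, β ≤ α i) (hs : ∑ i, α i = 1)
    (hc : c = 1 / (1 - β)) (y : Fin n → ℝ) (hy : ∀ i, 0 ≤ y i) :
    ∏ i, y i ^ (2 * α i) ≤
      ∑ i, α i * y i ^ 2 - c * ∑ i, α i * (y i - ∑ k, α k * y k) ^ 2 := by
  have key := key_ineq α y β hβ0 hβ1 hα hαβ hs hy
  set m : ℝ := ∑ k, α k * y k with hm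
  have hvar : ∑ i, α i * (y i - m) ^ 2 = (∑ i, α i * y i ^ 2) - m ^ 2 := by
    have e : ∀ i : Fin n, α i * (y i - m) ^ 2
        = α i * y i ^ 2 - 2 * m * (α i * y i) + m ^ 2 * α i := fun i => by ring
    rw [Finset.sum_congr rfl (fun i _ => e i), Finset.sum_add_distrib,
      Finset.sum_sub_distrib, ← Finset.mul_sum, ← Finset.mul_sum, hs]
    ring
  rw [hvar]
  have hβ' : (0:ℝ) < 1 - β := by linarith
  have hc' : c * (1 - β) = 1 := by rw [hc]; field_simp
  have hcnn : 0 ≤ c := by rw [hc]; positivity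
  have e1 : c * (1 - β) * (∏ i, y i ^ (2 * α i)) = ∏ i, y i ^ (2 * α i) := by
    rw [hc', one_mul]
  have e2 : c * (1 - β) * (∑ i, α i * y i ^ 2) = ∑ i, α i * y i ^ 2 := by
    rw [hc', one_mul]
  nlinarith [mul_le_mul_of_nonneg_left key hcnn, e1, e2]


open MeasureTheory in
theorem refined_holder_upper {Ω : Type*} [MeasurableSpace Ω] (μ : Measure Ω)
    (n : ℕ) (hn : 1 ≤ n) (p : Fin n → ℝ) (hp : ∀ i, 1 < p i)
    (hps : ∑ i, 1 / p i = 1)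
    (f : Fin n → Ω → ℝ) (hmeas : ∀ i, Measurable (f i))
    (hnonneg : ∀ i, ∀ u, 0 ≤ f i u)
    (hint : ∀ i, Integrable (fun u => f i u ^ p i) μ)
    (N : Fin n → ℝ) (hN : ∀ i, N i = (∫ u, f i u ^ p i ∂μ) ^ (1 / p i))
    (hNpos : ∀ i, 0 < N i) :
    ∫ u, ∏ i, f i u ∂μ ≤
      (∏ i, N i) *
        (1 - ((⨆ i, p i) / ((⨆ i, p i) - 1)) *
          ∑ i, (1 / p i) *
            ∫ u, (f i u ^ (p i / 2) / N i ^ (p i / 2) -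
              ∑ k, (1 / p k) * (f k u ^ (p k / 2) / N k ^ (p k / 2))) ^ 2 ∂μ) := by
  have hppos : ∀ i, 0 < p i := fun i => lt_trans one_pos (hp i)
  set q : ℝ := ⨆ i, p i with hqdef
  have hq : ∀ i, p i ≤ q := fun i => le_ciSup (Set.Finite.bddAbove (Set.finite_range p)) i
  have hq1 : 1 < q := lt_of_lt_of_le (hp ⟨0, by omega⟩) (hq ⟨0, by omega⟩)
  have hqpos : 0 < q := by linarith
  set c : ℝ := q / (q - 1) with hcdef
  set β : ℝ := 1 / q with hβdef
  have hβ0 : 0 ≤ β := by rw [hβdef]; positivity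
  have hβ1 : β < 1 := by rw [hβdef, div_lt_one hqpos]; linarith
  have hαβ : ∀ i, β ≤ 1 / p i := fun i => one_div_le_one_div_of_le (hppos i) (hq i)
  have hc : c = 1 / (1 - β) := by
    have h1 : q ≠ 0 := hqpos.ne'
    have h2 : (1:ℝ) - 1 / q = (q - 1) / q := by field_simp
    rw [hcdef, hβdef, h2, one_div_div]
  -- abbreviations
  set Y : Fin n → Ω → ℝ := fun i u => f i u ^ (p i / 2) / N i ^ (p i / 2) with hY
  set M : Ω → ℝ := fun u => ∑ k, (1 / p k) * Y k u with hM
  have hYnn : ∀ i u, 0 ≤ Y i u := fun i u =>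
    div_nonneg (Real.rpow_nonneg (hnonneg i u) _) (Real.rpow_nonneg (hNpos i).le _)
  have hsq : ∀ (x r : ℝ), 0 ≤ x → (x ^ (r / 2)) ^ 2 = x ^ r := by
    intro x r hx
    rw [← Real.rpow_natCast (x ^ (r / 2)) 2, ← Real.rpow_mul hx]
    norm_num
  have hYsq : ∀ i u, Y i u ^ 2 = f i u ^ p i / N i ^ p i := by
    intro i u
    rw [hY]
    simp only
    rw [div_pow, hsq _ _ (hnonneg i u), hsq _ _ (hNpos i).le]
  have hYmeas : ∀ i, Measurable (Y i) := by
    intro i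
    rw [hY]
    have : Measurable (fun u => f i u ^ (p i / 2)) :=
      (Real.continuous_rpow_const (div_nonneg (hppos i).le (by norm_num))).measurable.comp (hmeas i)
    exact this.div_const _
  have hgint : ∀ i, Integrable (fun u => f i u ^ p i / N i ^ p i) μ :=
    fun i => (hint i).div_const _
  have hYL2 : ∀ i, MemLp (Y i) 2 μ := by
    intro i
    rw [memLp_two_iff_integrable_sq (hYmeas i).aestronglyMeasurable]
    have : (fun u => Y i u ^ 2) = fun u => f i u ^ p i / N i ^ p i := by
      funext u; exact hYsq i u
    rw [this]
    exact hgint i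
  have hML2 : MemLp M 2 μ := by
    rw [hM]
    exact memLp_finset_sum univ (fun k _ => (hYL2 k).const_mul _)
  have hH2int : ∀ i, Integrable (fun u => (Y i u - M u) ^ 2) μ :=
    fun i => ((hYL2 i).sub hML2).integrable_sq
  have hNprod : 0 < ∏ i, N i := Finset.prod_pos (fun i _ => hNpos i)
  -- the geometric mean identity
  have hpow : ∀ (x : ℝ), 0 ≤ x → ∀ i : Fin n, (x ^ (p i / 2)) ^ (2 * (1 / p i)) = x := by
    intro x hx i
    rw [← Real.rpow_mul hx]
    have hne : p i ≠ 0 := (hppos i).ne'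
    have : p i / 2 * (2 * (1 / p i)) = 1 := by
      field_simp
    rw [this, Real.rpow_one]
  have hGeq : ∀ u, ∏ i, Y i u ^ (2 * (1 / p i)) = (∏ i, f i u) / ∏ i, N i := by
    intro u
    rw [← Finset.prod_div_distrib]
    refine Finset.prod_congr rfl fun i _ => ?_
    rw [hY]
    simp only
    rw [Real.div_rpow (Real.rpow_nonneg (hnonneg i u) _) (Real.rpow_nonneg (hNpos i).le _),
      hpow _ (hnonneg i u) i, hpow _ (hNpos i).le i]
  -- pointwise bound
  have hpt : ∀ u, (∏ i, f i u) ≤ (∏ i, N i) *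
      ((∑ i, (1 / p i) * (f i u ^ p i / N i ^ p i)) -
        c * ∑ i, (1 / p i) * (Y i u - M u) ^ 2) := by
    intro u
    have h0 := pointwise_refined (fun i => 1 / p i) β c hβ0 hβ1
      (fun i => (one_div_pos.mpr (hppos i)).le) hαβ hps hc (fun i => Y i u) (fun i => hYnn i u)
    rw [hGeq u] at h0
    have hMu : M u = ∑ k, (1 / p k) * Y k u := by rw [hM]
    rw [div_le_iff₀ hNprod] at h0
    calc (∏ i, f i u) ≤
        ((∑ i, (1 / p i) * Y i u ^ 2) -
          c * ∑ i, (1 / p i) * (Y i u - ∑ k, (1 / p k) * Y k u) ^ 2) * (∏ i, N i) := h0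
      _ = (∏ i, N i) * ((∑ i, (1 / p i) * (f i u ^ p i / N i ^ p i)) -
          c * ∑ i, (1 / p i) * (Y i u - M u) ^ 2) := by
          rw [mul_comm, hMu]
          congr 2
          exact Finset.sum_congr rfl fun i _ => by rw [hYsq]
  -- integrability
  have hSint : Integrable (fun u => ∑ i, (1 / p i) * (f i u ^ p i / N i ^ p i)) μ :=
    integrable_finset_sum univ (fun i _ => (hgint i).const_mul _)
  have hVint : Integrable (fun u => ∑ i, (1 / p i) * (Y i u - M u) ^ 2) μ :=
    integrable_finset_sum univ (fun i _ => ((hH2int i).const_mul _))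
  have hRint : Integrable (fun u => (∏ i, N i) *
      ((∑ i, (1 / p i) * (f i u ^ p i / N i ^ p i)) -
        c * ∑ i, (1 / p i) * (Y i u - M u) ^ 2)) μ :=
    (hSint.sub (hVint.const_mul c)).const_mul _
  have hLmeas : Measurable (fun u => ∏ i, f i u) :=
    Finset.measurable_prod univ (fun i _ => hmeas i)
  have hcnn : 0 ≤ c := by
    rw [hc]
    have : (0:ℝ) < 1 - β := by linarith
    positivity
  have hLint : Integrable (fun u => ∏ i, f i u) μ := by
    refine Integrable.mono' (hSint.const_mul (∏ i, N i)) hLmeas.aestronglyMeasurable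
      (Filter.Eventually.of_forall fun u => ?_)
    rw [Real.norm_eq_abs, abs_of_nonneg (Finset.prod_nonneg fun i _ => hnonneg i u)]
    refine le_trans (hpt u) (mul_le_mul_of_nonneg_left ?_ hNprod.le)
    have hV : 0 ≤ ∑ i, (1 / p i) * (Y i u - M u) ^ 2 :=
      Finset.sum_nonneg fun i _ => mul_nonneg (one_div_nonneg.mpr (hppos i).le) (sq_nonneg _)
    nlinarith [mul_nonneg hcnn hV]
  -- integrate
  have hmono := integral_mono hLint hRint hpt
  -- compute the RHS integral
  have hI1 : ∀ i, ∫ u, f i u ^ p i / N i ^ p i ∂μ = 1 := by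
    intro i
    have hInn : 0 ≤ ∫ u, f i u ^ p i ∂μ :=
      integral_nonneg fun u => Real.rpow_nonneg (hnonneg i u) _
    have hIne : (∫ u, f i u ^ p i ∂μ) ≠ 0 := by
      intro h
      have := hN i
      rw [h, Real.zero_rpow (one_div_ne_zero (hppos i).ne')] at this
      exact (hNpos i).ne' this
    have hNp : N i ^ p i = ∫ u, f i u ^ p i ∂μ := by
      rw [hN i, ← Real.rpow_mul hInn, one_div, inv_mul_cancel₀ (hppos i).ne', Real.rpow_one]
    rw [integral_div, hNp, div_self hIne]
  have hcomp : ∫ u, (∏ i, N i) *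
      ((∑ i, (1 / p i) * (f i u ^ p i / N i ^ p i)) -
        c * ∑ i, (1 / p i) * (Y i u - M u) ^ 2) ∂μ
      = (∏ i, N i) * (1 - c * ∑ i, (1 / p i) * ∫ u, (Y i u - M u) ^ 2 ∂μ) := by
    rw [integral_const_mul, integral_sub hSint (hVint.const_mul c)]
    congr 1
    rw [integral_finset_sum univ (fun i _ => (hgint i).const_mul _)]
    rw [integral_const_mul, integral_finset_sum univ (fun i _ => (hH2int i).const_mul _)]
    have e1 : ∑ i, ∫ u, (1 / p i) * (f i u ^ p i / N i ^ p i) ∂μ = 1 := by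
      have : ∀ i : Fin n, ∫ u, (1 / p i) * (f i u ^ p i / N i ^ p i) ∂μ = 1 / p i := by
        intro i
        rw [integral_const_mul, hI1 i, mul_one]
      rw [Finset.sum_congr rfl fun i _ => this i]
      exact hps
    rw [e1]
    congr 2
    exact Finset.sum_congr rfl fun i _ => by rw [integral_const_mul]
  rw [hcomp] at hmono
  exact hmono
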